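/- If Θ' is obtained from a hypertree Θ by a single fold (replacing two intersecting hyperedges e, e' with their union e ∪ e'), then Θ' is again a hypertree. -/

import Mathlib

/-- A hypergraph on `[n]`, identified with its set of hyperedges:
every hyperedge has at least two vertices. -/
def IsHypergraph {n : ℕ} (E : Finset (Finset (Fin n))) : Prop :=
  ∀ e ∈ E, 2 ≤ e.card

/-- Data of a walk: a length `len`, a sequence of `len + 1` vertices and
`len` hyperedges. -/
structure WalkData (n : ℕ) where
  len : ℕ
  verts : Fin (len + 1) → Fin n
  eds : Fin len → Finset (Fin n)

/-- `s` is a simple walk from `v` to `w` in the hypergraph `E`: an alternating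
sequence of pairwise distinct vertices and pairwise distinct hyperedges
`v = v₀, e₁, v₁, …, e_p, v_p = w` with `{vₖ, vₖ₊₁} ⊆ eₖ₊₁`. -/
def IsSimpleWalk {n : ℕ} (E : Finset (Finset (Fin n))) (v w : Fin n)
    (s : WalkData n) : Prop :=
  s.verts 0 = v ∧ s.verts (Fin.last s.len) = w ∧
  Function.Injective s.verts ∧ Function.Injective s.eds ∧
  ∀ k : Fin s.len, s.eds k ∈ E ∧ s.verts k.castSucc ∈ s.eds k ∧ s.verts k.succ ∈ s.eds k

/-- A hypertree: a hypergraph in which any two vertices are joined by a unique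
simple walk. -/
def IsHypertree {n : ℕ} (E : Finset (Finset (Fin n))) : Prop :=
  IsHypergraph E ∧ ∀ v w : Fin n, ∃! s : WalkData n, IsSimpleWalk E v w s

namespace FoldAux

variable {n : ℕ}

/-- natural-number indexed vertices (clamped). -/
def nverts (s : WalkData n) (k : ℕ) : Fin n := s.verts ⟨min k s.len, by omega⟩

/-- natural-number indexed edges (junk beyond). -/
def neds (s : WalkData n) (k : ℕ) : Finset (Fin n) :=
  if h : k < s.len then s.eds ⟨k, h⟩ else ∅

lemma nverts_eq (s : WalkData n) (k : ℕ) (h : k ≤ s.len) :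
    nverts s k = s.verts ⟨k, by omega⟩ := by
  simp [nverts, Nat.min_eq_left h]

lemma neds_eq (s : WalkData n) (k : ℕ) (h : k < s.len) :
    neds s k = s.eds ⟨k, h⟩ := dif_pos h

theorem walk_ext {s t : WalkData n} (hl : s.len = t.len)
    (hv : ∀ (k : ℕ) (h1 : k < s.len + 1) (h2 : k < t.len + 1),
      s.verts ⟨k, h1⟩ = t.verts ⟨k, h2⟩)
    (he : ∀ (k : ℕ) (h1 : k < s.len) (h2 : k < t.len),
      s.eds ⟨k, h1⟩ = t.eds ⟨k, h2⟩) : s = t := by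
  obtain ⟨a, b, c⟩ := s
  obtain ⟨d, f, g⟩ := t
  dsimp at hl
  subst hl
  simp only [WalkData.mk.injEq, heq_eq_eq]
  refine ⟨trivial, funext fun k => ?_, funext fun k => ?_⟩
  · simpa using hv k k.isLt k.isLt
  · simpa using he k k.isLt k.isLt

/- extraction from walk equality -/
lemma eq_len {s t : WalkData n} (h : s = t) : s.len = t.len := by rw [h]

lemma eq_verts {s t : WalkData n} (h : s = t) (k : ℕ) (h1 : k < s.len + 1)
    (h2 : k < t.len + 1) : s.verts ⟨k, h1⟩ = t.verts ⟨k, h2⟩ := by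
  subst h; rfl

lemma eq_eds {s t : WalkData n} (h : s = t) (k : ℕ) (h1 : k < s.len)
    (h2 : k < t.len) : s.eds ⟨k, h1⟩ = t.eds ⟨k, h2⟩ := by
  subst h; rfl

variable {E F : Finset (Finset (Fin n))} {v w : Fin n} {s : WalkData n}

/- accessors -/
lemma sw_start (hs : IsSimpleWalk E v w s) (h : 0 < s.len + 1) :
    s.verts ⟨0, h⟩ = v := by
  have := hs.1
  rwa [show (0 : Fin (s.len + 1)) = ⟨0, h⟩ by rfl] at this

lemma sw_end (hs : IsSimpleWalk E v w s) (h : s.len < s.len + 1) :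
    s.verts ⟨s.len, h⟩ = w := by
  have := hs.2.1
  rwa [show (Fin.last s.len) = ⟨s.len, h⟩ by rfl] at this

lemma sw_vinj (hs : IsSimpleWalk E v w s) {i j : ℕ} (hi : i < s.len + 1)
    (hj : j < s.len + 1) (h : s.verts ⟨i, hi⟩ = s.verts ⟨j, hj⟩) : i = j := by
  have := hs.2.2.1 h
  exact congrArg Fin.val this

lemma sw_einj (hs : IsSimpleWalk E v w s) {i j : ℕ} (hi : i < s.len)
    (hj : j < s.len) (h : s.eds ⟨i, hi⟩ = s.eds ⟨j, hj⟩) : i = j := by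
  have := hs.2.2.2.1 h
  exact congrArg Fin.val this

lemma sw_cond (hs : IsSimpleWalk E v w s) (i : ℕ) (h : i < s.len) :
    s.eds ⟨i, h⟩ ∈ E ∧ s.verts ⟨i, by omega⟩ ∈ s.eds ⟨i, h⟩ ∧
      s.verts ⟨i + 1, by omega⟩ ∈ s.eds ⟨i, h⟩ := by
  have := hs.2.2.2.2 ⟨i, h⟩
  have h1 : (⟨i, h⟩ : Fin s.len).castSucc = ⟨i, by omega⟩ := rfl
  have h2 : (⟨i, h⟩ : Fin s.len).succ = ⟨i + 1, by omega⟩ := rfl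
  rw [h1, h2] at this
  exact this

lemma walk_mono (hs : IsSimpleWalk E v w s)
    (hEF : ∀ (k : ℕ) (h : k < s.len), s.eds ⟨k, h⟩ ∈ F) :
    IsSimpleWalk F v w s :=
  ⟨hs.1, hs.2.1, hs.2.2.1, hs.2.2.2.1, fun k =>
    ⟨by simpa using hEF k.val k.isLt, (hs.2.2.2.2 k).2.1, (hs.2.2.2.2 k).2.2⟩⟩

/-- length-one walk. -/
def single (v w : Fin n) (f : Finset (Fin n)) : WalkData n :=
  ⟨1, fun k => if (k : ℕ) = 0 then v else w, fun _ => f⟩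

/-- length-two walk. -/
def pair (v x w : Fin n) (f g : Finset (Fin n)) : WalkData n :=
  ⟨2, fun k => if (k : ℕ) = 0 then v else if (k : ℕ) = 1 then x else w,
    fun k => if (k : ℕ) = 0 then f else g⟩

@[simp] lemma pair_len' (v x w : Fin n) (f g : Finset (Fin n)) :
    (pair v x w f g).len = 2 := rfl
@[simp] lemma single_len (v w : Fin n) (f : Finset (Fin n)) :
    (single v w f).len = 1 := rfl

lemma single_isSimpleWalk (hvw : v ≠ w) {f : Finset (Fin n)} (hf : f ∈ E)
    (hv : v ∈ f) (hw : w ∈ f) : IsSimpleWalk E v w (single v w f) := by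
  refine ⟨rfl, rfl, ?_, ?_, fun k => ⟨hf, ?_, ?_⟩⟩
  · intro a b hab
    have ha : (a : ℕ) = 0 ∨ (a : ℕ) = 1 := by have := a.isLt; simp only [single_len, pair_len'] at this; omega
    have hb : (b : ℕ) = 0 ∨ (b : ℕ) = 1 := by have := b.isLt; simp only [single_len, pair_len'] at this; omega
    simp only [single] at hab
    rcases ha with h | h <;> rcases hb with h' | h' <;>
      first
        | exact Fin.ext (by omega)
        | (rw [h, h'] at hab; simp at hab; tauto)
  · intro a b _
    have ha := a.isLt; have hb := b.isLt
    simp only [single_len] at ha hb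
    exact Fin.ext (by omega)
  · have hk : (k : ℕ) = 0 := by have := k.isLt; simp only [single_len, pair_len'] at this; omega
    have h1 : (k.castSucc : ℕ) = 0 := by show (k : ℕ) = 0; exact hk
    show (if (k.castSucc : ℕ) = 0 then v else w) ∈ f
    rw [h1]; simpa using hv
  · have hk : (k : ℕ) = 0 := by have := k.isLt; simp only [single_len, pair_len'] at this; omega
    have h1 : (k.succ : ℕ) = 1 := by show (k : ℕ) + 1 = 1; omega
    show (if (k.succ : ℕ) = 0 then v else w) ∈ f
    rw [h1]; simpa using hw

@[simp] lemma pair_len (v x w : Fin n) (f g : Finset (Fin n)) :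
    (pair v x w f g).len = 2 := rfl

lemma pair_isSimpleWalk {x : Fin n} {f g : Finset (Fin n)}
    (hvx : v ≠ x) (hxw : x ≠ w) (hvw : v ≠ w) (hfg : f ≠ g)
    (hf : f ∈ E) (hg : g ∈ E) (hv : v ∈ f) (hx1 : x ∈ f) (hx2 : x ∈ g)
    (hw : w ∈ g) : IsSimpleWalk E v w (pair v x w f g) := by
  refine ⟨rfl, rfl, ?_, ?_, fun k => ?_⟩
  · intro a b hab
    have ha : (a : ℕ) = 0 ∨ (a : ℕ) = 1 ∨ (a : ℕ) = 2 := by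
      have := a.isLt; simp only [single_len, pair_len'] at this; omega
    have hb : (b : ℕ) = 0 ∨ (b : ℕ) = 1 ∨ (b : ℕ) = 2 := by
      have := b.isLt; simp only [single_len, pair_len'] at this; omega
    simp only [pair] at hab
    rcases ha with h | h | h <;> rcases hb with h' | h' | h' <;>
      first
        | exact Fin.ext (by omega)
        | (rw [h, h'] at hab; simp at hab; tauto)
  · intro a b hab
    have ha : (a : ℕ) = 0 ∨ (a : ℕ) = 1 := by have := a.isLt; simp only [single_len, pair_len'] at this; omega
    have hb : (b : ℕ) = 0 ∨ (b : ℕ) = 1 := by have := b.isLt; simp only [single_len, pair_len'] at this; omega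
    simp only [pair] at hab
    rcases ha with h | h <;> rcases hb with h' | h' <;>
      first
        | exact Fin.ext (by omega)
        | (rw [h, h'] at hab; simp at hab; tauto)
  · have hk : (k : ℕ) = 0 ∨ (k : ℕ) = 1 := by have := k.isLt; simp only [single_len, pair_len'] at this; omega
    rcases hk with hk | hk
    · have h1 : (k.castSucc : ℕ) = 0 := by show (k : ℕ) = 0; exact hk
      have h2 : (k.succ : ℕ) = 1 := by show (k : ℕ) + 1 = 1; omega
      refine ⟨?_, ?_, ?_⟩
      · show (if (k : ℕ) = 0 then f else g) ∈ E
        rw [hk]; simpa using hf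
      · show (if (k.castSucc : ℕ) = 0 then v else _) ∈ (if (k : ℕ) = 0 then f else g)
        rw [hk, h1]; simpa using hv
      · show (if (k.succ : ℕ) = 0 then v else if (k.succ : ℕ) = 1 then x else w) ∈
          (if (k : ℕ) = 0 then f else g)
        rw [hk, h2]; simpa using hx1
    · have h1 : (k.castSucc : ℕ) = 1 := by show (k : ℕ) = 1; exact hk
      have h2 : (k.succ : ℕ) = 2 := by show (k : ℕ) + 1 = 2; omega
      refine ⟨?_, ?_, ?_⟩
      · show (if (k : ℕ) = 0 then f else g) ∈ E
        rw [hk]; simpa using hg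
      · show (if (k.castSucc : ℕ) = 0 then v else if (k.castSucc : ℕ) = 1 then x else w) ∈
          (if (k : ℕ) = 0 then f else g)
        rw [hk, h1]; simpa using hx2
      · show (if (k.succ : ℕ) = 0 then v else if (k.succ : ℕ) = 1 then x else w) ∈
          (if (k : ℕ) = 0 then f else g)
        rw [hk, h2]; simpa using hw
/-- the sub-walk from position `a` to position `b`. -/
def segment (s : WalkData n) (a b : ℕ) : WalkData n :=
  ⟨b - a, fun k => nverts s (a + k), fun k => neds s (a + k)⟩

lemma segment_len (s : WalkData n) (a b : ℕ) : (segment s a b).len = b - a := rfl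

lemma segment_isSimpleWalk (hs : IsSimpleWalk E v w s) (a b : ℕ) (hab : a ≤ b)
    (hb : b ≤ s.len) (hva : a < s.len + 1) (hvb : b < s.len + 1) :
    IsSimpleWalk E (s.verts ⟨a, hva⟩) (s.verts ⟨b, hvb⟩) (segment s a b) := by
  refine ⟨?_, ?_, ?_, ?_, fun k => ?_⟩
  · show nverts s (a + ((0 : Fin (b - a + 1)) : ℕ)) = _
    rw [show ((0 : Fin (b - a + 1)) : ℕ) = 0 by rfl]
    rw [nverts_eq s (a + 0) (by omega)]
    rfl
  · show nverts s (a + ((Fin.last (b - a)) : ℕ)) = _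
    rw [show ((Fin.last (b - a)) : ℕ) = b - a by rfl]
    rw [nverts_eq s (a + (b - a)) (by omega)]
    congr 1
    exact Fin.ext (by simp; omega)
  · intro i j hij
    have hi := i.isLt; have hj := j.isLt
    simp only [segment_len] at hi hj
    simp only [segment] at hij
    rw [nverts_eq s (a + i) (by omega), nverts_eq s (a + j) (by omega)] at hij
    have := sw_vinj hs (by omega) (by omega) hij
    exact Fin.ext (by omega)
  · intro i j hij
    have hi := i.isLt; have hj := j.isLt
    simp only [segment_len] at hi hj
    simp only [segment] at hij
    rw [neds_eq s (a + i) (by omega), neds_eq s (a + j) (by omega)] at hij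
    have := sw_einj hs (by omega) (by omega) hij
    exact Fin.ext (by omega)
  · have hk : (k : ℕ) < b - a := by
      have := k.isLt; simpa only [segment_len] using this
    have h1 : (k.castSucc : ℕ) = (k : ℕ) := rfl
    have h2 : (k.succ : ℕ) = (k : ℕ) + 1 := rfl
    show neds s (a + k) ∈ E ∧ nverts s (a + (k.castSucc : ℕ)) ∈ neds s (a + k) ∧
      nverts s (a + (k.succ : ℕ)) ∈ neds s (a + k)
    rw [h1, h2, neds_eq s (a + k) (by omega), nverts_eq s (a + k) (by omega),
      nverts_eq s (a + ((k : ℕ) + 1)) (by omega)]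
    have := sw_cond hs (a + k) (by omega)
    refine ⟨this.1, this.2.1, ?_⟩
    have h3 : a + ((k : ℕ) + 1) = (a + (k : ℕ)) + 1 := by omega
    rw [show (⟨a + ((k : ℕ) + 1), by omega⟩ : Fin (s.len + 1)) =
      ⟨(a + (k : ℕ)) + 1, by omega⟩ from Fin.ext h3]
    exact this.2.2

lemma segment_eds (s : WalkData n) (a b : ℕ) (k : ℕ) (h1 : k < (segment s a b).len)
    (h2 : a + k < s.len) :
    (segment s a b).eds ⟨k, h1⟩ = s.eds ⟨a + k, h2⟩ := by
  show neds s (a + k) = _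
  exact neds_eq s (a + k) h2

lemma segment_verts (s : WalkData n) (a b : ℕ) (k : ℕ)
    (h1 : k < (segment s a b).len + 1) (h2 : a + k ≤ s.len) :
    (segment s a b).verts ⟨k, h1⟩ = s.verts ⟨a + k, by omega⟩ := by
  show nverts s (a + k) = _
  exact nverts_eq s (a + k) h2

/-- replace edge `f` by `g`. -/
def repl (s : WalkData n) (f g : Finset (Fin n)) : WalkData n :=
  ⟨s.len, s.verts, fun k => if s.eds k = f then g else s.eds k⟩

@[simp] lemma repl_len (s : WalkData n) (f g : Finset (Fin n)) :
    (repl s f g).len = s.len := rfl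

lemma repl_verts (s : WalkData n) (f g : Finset (Fin n)) (k : ℕ)
    (h1 : k < (repl s f g).len + 1) (h2 : k < s.len + 1) :
    (repl s f g).verts ⟨k, h1⟩ = s.verts ⟨k, h2⟩ := rfl

lemma repl_eds (s : WalkData n) (f g : Finset (Fin n)) (k : ℕ)
    (h1 : k < (repl s f g).len) (h2 : k < s.len) :
    (repl s f g).eds ⟨k, h1⟩ = if s.eds ⟨k, h2⟩ = f then g else s.eds ⟨k, h2⟩ := rfl

/-- contract the two edges at positions `i, i+1` into the single edge `f`,
removing the intermediate vertex. -/
def contract (s : WalkData n) (i : ℕ) (f : Finset (Fin n)) : WalkData n :=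
  ⟨s.len - 1,
   fun k => if (k : ℕ) ≤ i then nverts s k else nverts s ((k : ℕ) + 1),
   fun k => if (k : ℕ) < i then neds s k else if (k : ℕ) = i then f
     else neds s ((k : ℕ) + 1)⟩

@[simp] lemma contract_len (s : WalkData n) (i : ℕ) (f : Finset (Fin n)) :
    (contract s i f).len = s.len - 1 := rfl

lemma contract_verts (s : WalkData n) (i : ℕ) (f : Finset (Fin n)) (k : ℕ)
    (h : k < (contract s i f).len + 1) :
    (contract s i f).verts ⟨k, h⟩ =
      if k ≤ i then nverts s k else nverts s (k + 1) := rfl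

lemma contract_eds (s : WalkData n) (i : ℕ) (f : Finset (Fin n)) (k : ℕ)
    (h : k < (contract s i f).len) :
    (contract s i f).eds ⟨k, h⟩ =
      if k < i then neds s k else if k = i then f else neds s (k + 1) := rfl

/-- expand edge at position `i` into two edges `f, g` with the new
vertex `x` in between. -/
def expand (s : WalkData n) (i : ℕ) (x : Fin n) (f g : Finset (Fin n)) :
    WalkData n :=
  ⟨s.len + 1,
   fun k => if (k : ℕ) ≤ i then nverts s k else if (k : ℕ) = i + 1 then x
     else nverts s ((k : ℕ) - 1),
   fun k => if (k : ℕ) < i then neds s k else if (k : ℕ) = i then f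
     else if (k : ℕ) = i + 1 then g else neds s ((k : ℕ) - 1)⟩

@[simp] lemma expand_len (s : WalkData n) (i : ℕ) (x : Fin n)
    (f g : Finset (Fin n)) : (expand s i x f g).len = s.len + 1 := rfl

lemma expand_verts (s : WalkData n) (i : ℕ) (x : Fin n) (f g : Finset (Fin n))
    (k : ℕ) (h : k < (expand s i x f g).len + 1) :
    (expand s i x f g).verts ⟨k, h⟩ =
      if k ≤ i then nverts s k else if k = i + 1 then x
        else nverts s (k - 1) := rfl

lemma expand_eds (s : WalkData n) (i : ℕ) (x : Fin n) (f g : Finset (Fin n))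
    (k : ℕ) (h : k < (expand s i x f g).len) :
    (expand s i x f g).eds ⟨k, h⟩ =
      if k < i then neds s k else if k = i then f
        else if k = i + 1 then g else neds s (k - 1) := rfl

variable {Θ : Finset (Finset (Fin n))}

/-- in a hypertree, distinct edges meet in at most one vertex. -/
lemma inter_card (hΘ : IsHypertree Θ) {f g : Finset (Fin n)} (hf : f ∈ Θ)
    (hg : g ∈ Θ) (hfg : f ≠ g) : (f ∩ g).card ≤ 1 := by
  by_contra h
  push_neg at h
  obtain ⟨y, hy, z, hz, hyz⟩ := Finset.one_lt_card.mp h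
  have hyf : y ∈ f := (Finset.mem_inter.mp hy).1
  have hyg : y ∈ g := (Finset.mem_inter.mp hy).2
  have hzf : z ∈ f := (Finset.mem_inter.mp hz).1
  have hzg : z ∈ g := (Finset.mem_inter.mp hz).2
  have w1 := single_isSimpleWalk (E := Θ) hyz hf hyf hzf
  have w2 := single_isSimpleWalk (E := Θ) hyz hg hyg hzg
  have heq := ((hΘ.2 y z).unique w1 w2)
  have := eq_eds heq 0 (by simp) (by simp)
  exact hfg this

/-- if two intersecting edges both appear in a simple walk of a hypertree,
they appear consecutively, meeting the walk at the common vertex. -/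
lemma consec (hΘ : IsHypertree Θ) {f g : Finset (Fin n)} (hf : f ∈ Θ)
    (hg : g ∈ Θ) (hfg : f ≠ g) {x : Fin n} (hxf : x ∈ f) (hxg : x ∈ g)
    {v w : Fin n} {s : WalkData n} (hs : IsSimpleWalk Θ v w s)
    (p q : ℕ) (hp : p < s.len) (hq : q < s.len) (hpq : p < q)
    (hfp : s.eds ⟨p, hp⟩ = f) (hgq : s.eds ⟨q, hq⟩ = g) :
    q = p + 1 ∧ s.verts ⟨q, by omega⟩ = x := by
  have uni : ∀ {v w : Fin n} {s1 s2 : WalkData n}, IsSimpleWalk Θ v w s1 →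
      IsSimpleWalk Θ v w s2 → s1 = s2 := fun h1 h2 => (hΘ.2 _ _).unique h1 h2
  have hq1 : q + 1 < s.len + 1 := by omega
  have hp0 : p < s.len + 1 := by omega
  have hvp : s.verts ⟨p, hp0⟩ ∈ f := by
    have := (sw_cond hs p hp).2.1; rwa [hfp] at this
  have hvq1 : s.verts ⟨q + 1, hq1⟩ ∈ g := by
    have := (sw_cond hs q hq).2.2; rwa [hgq] at this
  by_cases hxs : ∃ (k : ℕ) (h : k < s.len + 1), s.verts ⟨k, h⟩ = x
  · obtain ⟨k, hk, hkx⟩ := hxs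
    have hcase : k ≤ p ∨ (p < k ∧ k ≤ q) ∨ q + 1 ≤ k := by omega
    rcases hcase with hc | hc | hc
    · -- k ≤ p : contradiction
      exfalso
      have hne : x ≠ s.verts ⟨q + 1, hq1⟩ := by
        intro hxe
        rw [← hkx] at hxe
        have := sw_vinj hs hk hq1 hxe
        omega
      have w1 := single_isSimpleWalk (E := Θ) hne hg hxg hvq1
      have w2 := segment_isSimpleWalk hs k (q + 1) (by omega) (by omega) hk hq1
      rw [hkx] at w2
      have heq := uni w1 w2
      have := eq_len heq
      rw [single_len, segment_len] at this
      omega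
    · -- p < k ≤ q : the main case
      have w1 := single_isSimpleWalk (E := Θ)
        (show s.verts ⟨p, hp0⟩ ≠ x by
          intro hxe; rw [← hkx] at hxe
          have := sw_vinj hs hp0 hk hxe; omega) hf hvp hxf
      have w2 := segment_isSimpleWalk hs p k (by omega) (by omega) hp0 hk
      rw [hkx] at w2
      have heq := uni w1 w2
      have hlen := eq_len heq
      rw [single_len, segment_len] at hlen
      have hkp : k = p + 1 := by omega
      have hne2 : x ≠ s.verts ⟨q + 1, hq1⟩ := by
        intro hxe; rw [← hkx] at hxe
        have := sw_vinj hs hk hq1 hxe; omega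
      have w3 := single_isSimpleWalk (E := Θ) hne2 hg hxg hvq1
      have w4 := segment_isSimpleWalk hs k (q + 1) (by omega) (by omega) hk hq1
      rw [hkx] at w4
      have heq2 := uni w3 w4
      have hlen2 := eq_len heq2
      rw [single_len, segment_len] at hlen2
      have hqk : q = k := by omega
      refine ⟨by omega, ?_⟩
      rw [show (⟨q, by omega⟩ : Fin (s.len + 1)) = ⟨k, hk⟩ from Fin.ext (show q = k by omega)]
      exact hkx
    · -- q + 1 ≤ k : contradiction
      exfalso
      have hne : s.verts ⟨p, hp0⟩ ≠ x := by
        intro hxe; rw [← hkx] at hxe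
        have := sw_vinj hs hp0 hk hxe; omega
      have w1 := single_isSimpleWalk (E := Θ) hne hf hvp hxf
      have w2 := segment_isSimpleWalk hs p k (by omega) (by omega) hp0 hk
      rw [hkx] at w2
      have heq := uni w1 w2
      have := eq_len heq
      rw [single_len, segment_len] at this
      omega
  · exfalso
    push_neg at hxs
    have w1 := pair_isSimpleWalk (E := Θ) (x := x)
      (hxs p hp0)
      (fun h => hxs (q + 1) hq1 h.symm)
      (fun h => by have := sw_vinj hs hp0 hq1 h; omega)
      hfg hf hg hvp hxf hxg hvq1
    have w2 := segment_isSimpleWalk hs p (q + 1) (by omega) (by omega) hp0 hq1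
    have heq := uni w1 w2
    have hlen := eq_len heq
    rw [pair_len', segment_len] at hlen
    have hq2 : q = p + 1 := by omega
    have hv1 := eq_verts heq 1 (by rw [pair_len']; omega) (by rw [segment_len]; omega)
    have h1 : (pair (s.verts ⟨p, hp0⟩) x (s.verts ⟨q + 1, hq1⟩) f g).verts
        ⟨1, by rw [pair_len']; omega⟩ = x := rfl
    rw [h1, segment_verts s p (q + 1) 1 (by rw [segment_len]; omega) (by omega)] at hv1
    exact hxs (p + 1) (by omega) hv1.symm

lemma isSimpleWalk_intro {E : Finset (Finset (Fin n))} {v w : Fin n}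
    {s : WalkData n}
    (h0 : s.verts ⟨0, Nat.succ_pos _⟩ = v)
    (hl : s.verts ⟨s.len, Nat.lt_succ_self _⟩ = w)
    (hvi : ∀ (i j : ℕ) (hi : i < s.len + 1) (hj : j < s.len + 1),
      s.verts ⟨i, hi⟩ = s.verts ⟨j, hj⟩ → i = j)
    (hei : ∀ (i j : ℕ) (hi : i < s.len) (hj : j < s.len),
      s.eds ⟨i, hi⟩ = s.eds ⟨j, hj⟩ → i = j)
    (hcond : ∀ (i : ℕ) (h : i < s.len), s.eds ⟨i, h⟩ ∈ E ∧
      s.verts ⟨i, by omega⟩ ∈ s.eds ⟨i, h⟩ ∧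
      s.verts ⟨i + 1, by omega⟩ ∈ s.eds ⟨i, h⟩) :
    IsSimpleWalk E v w s := by
  refine ⟨?_, ?_, ?_, ?_, fun k => ?_⟩
  · rw [show (0 : Fin (s.len + 1)) = ⟨0, Nat.succ_pos _⟩ from Fin.ext (by simp)]
    exact h0
  · rw [show (Fin.last s.len) = ⟨s.len, Nat.lt_succ_self _⟩ from Fin.ext (by simp)]
    exact hl
  · intro a b hab
    refine Fin.ext (hvi a b a.isLt b.isLt ?_)
    simpa [Fin.eta] using hab
  · intro a b hab
    refine Fin.ext (hei a b a.isLt b.isLt ?_)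
    simpa [Fin.eta] using hab
  · have := hcond k.val k.isLt
    have h1 : (⟨(k : ℕ), k.isLt⟩ : Fin s.len) = k := Fin.eta k k.isLt
    have h2 : k.castSucc = ⟨(k : ℕ), by omega⟩ := rfl
    have h3 : k.succ = ⟨(k : ℕ) + 1, by omega⟩ := rfl
    rw [h1] at this
    rw [h2, h3]
    exact this

section Main

variable {Θ : Finset (Finset (Fin n))} {e e' : Finset (Fin n)} {x : Fin n}

open Classical in
/-- the image of a walk under the fold. -/
noncomputable def fold (e e' : Finset (Fin n)) (s : WalkData n) : WalkData n :=
  if h : ∃ i : ℕ, i + 1 < s.len ∧ ((neds s i = e ∧ neds s (i + 1) = e') ∨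
      (neds s i = e' ∧ neds s (i + 1) = e)) then
    contract s h.choose (e ∪ e')
  else repl (repl s e (e ∪ e')) e' (e ∪ e')

open Classical in
/-- the preimage of a walk under the fold. -/
noncomputable def unfold (e e' : Finset (Fin n)) (x : Fin n) (s : WalkData n) :
    WalkData n :=
  if h : ∃ (i : ℕ) (_ : i < s.len), neds s i = e ∪ e' then
    if nverts s h.choose ∈ e ∧ nverts s (h.choose + 1) ∈ e then repl s (e ∪ e') e
    else if nverts s h.choose ∈ e' ∧ nverts s (h.choose + 1) ∈ e' then
      repl s (e ∪ e') e'
    else if nverts s h.choose ∈ e then expand s h.choose x e e'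
    else expand s h.choose x e' e
  else s

lemma U_not_mem (hΘ : IsHypertree Θ) (he : e ∈ Θ) (he' : e' ∈ Θ)
    (hne : e ≠ e') : e ∪ e' ∉ Θ := by
  intro hU
  by_cases hUe : e ∪ e' = e
  · have hsub : e' ⊆ e := Finset.union_eq_left.mp hUe
    have h3 : e ∩ e' = e' := Finset.inter_eq_right.mpr hsub
    have h2 := hΘ.1 e' he'
    have h4 := inter_card hΘ he he' hne
    rw [h3] at h4
    omega
  · have h1 := inter_card hΘ hU he hUe
    have h3 : (e ∪ e') ∩ e = e := Finset.inter_eq_right.mpr Finset.subset_union_left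
    have h2 := hΘ.1 e he
    rw [h3] at h1
    omega

lemma e_ne_U (hΘ : IsHypertree Θ) (he : e ∈ Θ) (he' : e' ∈ Θ)
    (hne : e ≠ e') : e ≠ e ∪ e' := by
  intro hUe
  have hsub : e' ⊆ e := Finset.union_eq_left.mp hUe.symm
  have h3 : e ∩ e' = e' := Finset.inter_eq_right.mpr hsub
  have h2 := hΘ.1 e' he'
  have h4 := inter_card hΘ he he' hne
  rw [h3] at h4
  omega

lemma e'_ne_U (hΘ : IsHypertree Θ) (he : e ∈ Θ) (he' : e' ∈ Θ)
    (hne : e ≠ e') : e' ≠ e ∪ e' := by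
  intro hUe
  have hsub : e ⊆ e' := Finset.union_eq_right.mp hUe.symm
  have h3 : e ∩ e' = e := Finset.inter_eq_left.mpr hsub
  have h2 := hΘ.1 e he
  have h4 := inter_card hΘ he he' hne
  rw [h3] at h4
  omega

lemma mem_fold_iff {f : Finset (Fin n)} :
    f ∈ insert (e ∪ e') ((Θ.erase e).erase e') ↔
      f = e ∪ e' ∨ (f ∈ Θ ∧ f ≠ e ∧ f ≠ e') := by
  simp only [Finset.mem_insert, Finset.mem_erase]
  tauto

set_option maxHeartbeats 2000000 in
lemma fold_isSimpleWalk (hΘ : IsHypertree Θ) (he : e ∈ Θ) (he' : e' ∈ Θ)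
    (hne : e ≠ e') (hxe : x ∈ e) (hxe' : x ∈ e') {v w : Fin n} {s : WalkData n}
    (hs : IsSimpleWalk Θ v w s) :
    IsSimpleWalk (insert (e ∪ e') ((Θ.erase e).erase e')) v w (fold e e' s) := by
  have hU : e ∪ e' ∉ Θ := U_not_mem hΘ he he' hne
  have hedsΘ : ∀ (k : ℕ) (hk : k < s.len), s.eds ⟨k, hk⟩ ≠ e ∪ e' := by
    intro k hk hke
    have := (sw_cond hs k hk).1
    rw [hke] at this
    exact hU this
  rw [fold]
  split_ifs with h
  · -- the two edges appear, necessarily consecutively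
    set c := h.choose with hcdef
    have hc1 : c + 1 < s.len := h.choose_spec.1
    have hc2 := h.choose_spec.2
    rw [← hcdef] at hc2
    simp only [neds_eq s c (by omega : c < s.len), neds_eq s (c + 1) hc1] at hc2
    have hsub1 : s.eds ⟨c, by omega⟩ ⊆ e ∪ e' := by
      rcases hc2 with ⟨h1, _⟩ | ⟨h1, _⟩ <;> rw [h1]
      · exact Finset.subset_union_left
      · exact Finset.subset_union_right
    have hsub2 : s.eds ⟨c + 1, hc1⟩ ⊆ e ∪ e' := by
      rcases hc2 with ⟨_, h2⟩ | ⟨_, h2⟩ <;> rw [h2]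
      · exact Finset.subset_union_right
      · exact Finset.subset_union_left
    have hpos_e : ∀ (k : ℕ) (hk : k < s.len), s.eds ⟨k, hk⟩ = e →
        k = c ∨ k = c + 1 := by
      intro k hk hke
      rcases hc2 with ⟨h1, _⟩ | ⟨_, h2⟩
      · exact Or.inl (sw_einj hs hk (by omega) (hke.trans h1.symm))
      · exact Or.inr (sw_einj hs hk hc1 (hke.trans h2.symm))
    have hpos_e' : ∀ (k : ℕ) (hk : k < s.len), s.eds ⟨k, hk⟩ = e' →
        k = c ∨ k = c + 1 := by
      intro k hk hke
      rcases hc2 with ⟨_, h2⟩ | ⟨h1, _⟩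
      · exact Or.inr (sw_einj hs hk hc1 (hke.trans h2.symm))
      · exact Or.inl (sw_einj hs hk (by omega) (hke.trans h1.symm))
    apply isSimpleWalk_intro
    · rw [contract_verts, if_pos (Nat.zero_le c), nverts_eq s 0 (by omega)]
      exact sw_start hs _
    · rw [contract_verts]
      rw [contract_len]
      rw [if_neg (by omega : ¬ s.len - 1 ≤ c),
        show s.len - 1 + 1 = s.len from by omega, nverts_eq s s.len (le_refl _)]
      exact sw_end hs _
    · intro i j hi hj hab
      rw [contract_verts, contract_verts] at hab
      simp only [contract_len] at hi hj
      split_ifs at hab <;>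
        (rw [nverts_eq s _ (by omega), nverts_eq s _ (by omega)] at hab;
         have := sw_vinj hs _ _ hab; omega)
    · intro i j hi hj hab
      rw [contract_eds, contract_eds] at hab
      simp only [contract_len] at hi hj
      rcases lt_trichotomy i c with h1 | h1 | h1 <;>
        rcases lt_trichotomy j c with h2 | h2 | h2
      · rw [if_pos h1, if_pos h2, neds_eq s i (by omega),
          neds_eq s j (by omega)] at hab
        have := sw_einj hs _ _ hab; omega
      · rw [if_pos h1, if_neg (show ¬ j < c by omega), if_pos h2,
          neds_eq s i (by omega)] at hab
        exact absurd hab (hedsΘ i (by omega))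
      · rw [if_pos h1, if_neg (show ¬ j < c by omega),
          if_neg (show ¬ j = c by omega), neds_eq s i (by omega),
          neds_eq s (j + 1) (by omega)] at hab
        have := sw_einj hs _ _ hab; omega
      · rw [if_neg (show ¬ i < c by omega), if_pos h1, if_pos h2,
          neds_eq s j (by omega)] at hab
        exact absurd hab.symm (hedsΘ j (by omega))
      · omega
      · rw [if_neg (show ¬ i < c by omega), if_pos h1,
          if_neg (show ¬ j < c by omega), if_neg (show ¬ j = c by omega),
          neds_eq s (j + 1) (by omega)] at hab
        exact absurd hab.symm (hedsΘ (j + 1) (by omega))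
      · rw [if_neg (show ¬ i < c by omega), if_neg (show ¬ i = c by omega),
          if_pos h2, neds_eq s (i + 1) (by omega),
          neds_eq s j (by omega)] at hab
        have := sw_einj hs _ _ hab; omega
      · rw [if_neg (show ¬ i < c by omega), if_neg (show ¬ i = c by omega),
          if_neg (show ¬ j < c by omega), if_pos h2,
          neds_eq s (i + 1) (by omega)] at hab
        exact absurd hab (hedsΘ (i + 1) (by omega))
      · rw [if_neg (show ¬ i < c by omega), if_neg (show ¬ i = c by omega),
          if_neg (show ¬ j < c by omega), if_neg (show ¬ j = c by omega),
          neds_eq s (i + 1) (by omega), neds_eq s (j + 1) (by omega)] at hab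
        have := sw_einj hs _ _ hab; omega
    · intro i hi
      rw [contract_eds, contract_verts, contract_verts]
      simp only [contract_len] at hi
      rcases lt_trichotomy i c with hic | hic | hic
      · rw [if_pos hic, if_pos (by omega : i ≤ c), if_pos (by omega : i + 1 ≤ c),
          neds_eq s i (by omega), nverts_eq s i (by omega),
          nverts_eq s (i + 1) (by omega)]
        have hcnd := sw_cond hs i (by omega)
        refine ⟨?_, hcnd.2.1, hcnd.2.2⟩
        rw [mem_fold_iff]
        exact Or.inr ⟨hcnd.1,
          fun hke => by rcases hpos_e i (by omega) hke with hh | hh <;> omega,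
          fun hke => by rcases hpos_e' i (by omega) hke with hh | hh <;> omega⟩
      · rw [if_neg (by omega), if_pos hic, if_pos (by omega : i ≤ c),
          if_neg (by omega : ¬ i + 1 ≤ c)]
        refine ⟨Finset.mem_insert_self _ _, ?_, ?_⟩
        · rw [nverts_eq s i (by omega),
            show (⟨i, by omega⟩ : Fin (s.len + 1)) = ⟨c, by omega⟩ from
              Fin.ext hic]
          exact hsub1 (sw_cond hs c (by omega)).2.1
        · rw [show i + 1 + 1 = c + 1 + 1 from by omega,
            nverts_eq s (c + 1 + 1) (by omega)]
          exact hsub2 (sw_cond hs (c + 1) hc1).2.2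
      · rw [if_neg (by omega), if_neg (by omega), if_neg (by omega : ¬ i ≤ c),
          if_neg (by omega : ¬ i + 1 ≤ c), neds_eq s (i + 1) (by omega),
          nverts_eq s (i + 1) (by omega), nverts_eq s (i + 1 + 1) (by omega)]
        have hcnd := sw_cond hs (i + 1) (by omega)
        refine ⟨?_, hcnd.2.1, hcnd.2.2⟩
        rw [mem_fold_iff]
        exact Or.inr ⟨hcnd.1,
          fun hke => by rcases hpos_e (i + 1) (by omega) hke with hh | hh <;> omega,
          fun hke => by rcases hpos_e' (i + 1) (by omega) hke with hh | hh <;> omega⟩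
  · -- the two edges do not appear consecutively, hence at most one appears
    have honly : ∀ (i j : ℕ) (hi : i < s.len) (hj : j < s.len),
        s.eds ⟨i, hi⟩ = e → s.eds ⟨j, hj⟩ = e' → False := by
      intro i j hi hj hie hje
      rcases lt_trichotomy i j with hij | hij | hij
      · obtain ⟨hq, _⟩ := consec hΘ he he' hne hxe hxe' hs i j hi hj hij hie hje
        apply h
        refine ⟨i, by omega, Or.inl ⟨?_, ?_⟩⟩
        · rw [neds_eq s i (by omega)]; exact hie
        · rw [neds_eq s (i + 1) (by omega),
            show (⟨i + 1, by omega⟩ : Fin s.len) = ⟨j, hj⟩ from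
              Fin.ext (show i + 1 = j by omega)]
          exact hje
      · exact hne (hie.symm.trans (by
          rw [show (⟨i, hi⟩ : Fin s.len) = ⟨j, hj⟩ from Fin.ext hij]; exact hje))
      · obtain ⟨hq, _⟩ := consec hΘ he' he hne.symm hxe' hxe hs j i hj hi hij hje hie
        apply h
        refine ⟨j, by omega, Or.inr ⟨?_, ?_⟩⟩
        · rw [neds_eq s j (by omega)]; exact hje
        · rw [neds_eq s (j + 1) (by omega),
            show (⟨j + 1, by omega⟩ : Fin s.len) = ⟨i, hi⟩ from
              Fin.ext (show j + 1 = i by omega)]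
          exact hie
    have hrepl : ∀ (k : ℕ) (hk : k < s.len)
        (hk2 : k < (repl (repl s e (e ∪ e')) e' (e ∪ e')).len),
        (repl (repl s e (e ∪ e')) e' (e ∪ e')).eds ⟨k, hk2⟩ =
          if s.eds ⟨k, hk⟩ = e ∨ s.eds ⟨k, hk⟩ = e' then e ∪ e'
          else s.eds ⟨k, hk⟩ := by
      intro k hk hk2
      have hUe' : e ∪ e' ≠ e' := (e'_ne_U hΘ he he' hne).symm
      rw [repl_eds _ _ _ k hk2 hk, repl_eds _ _ _ k hk hk]
      by_cases h1 : s.eds ⟨k, hk⟩ = e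
      · rw [if_pos h1, if_neg hUe', if_pos (Or.inl h1)]
      · rw [if_neg h1]
        by_cases h2 : s.eds ⟨k, hk⟩ = e'
        · rw [if_pos h2, if_pos (Or.inr h2)]
        · rw [if_neg h2, if_neg (by tauto)]
    apply isSimpleWalk_intro
    · exact sw_start hs _
    · exact sw_end hs _
    · exact fun i j hi hj hab => sw_vinj hs hi hj hab
    · intro i j hi hj hab
      rw [hrepl i hi hi, hrepl j hj hj] at hab
      split_ifs at hab with h1 h2 h2
      · rcases h1 with h1 | h1 <;> rcases h2 with h2 | h2
        · exact sw_einj hs _ _ (h1.trans h2.symm)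
        · exact (honly i j hi hj h1 h2).elim
        · exact (honly j i hj hi h2 h1).elim
        · exact sw_einj hs _ _ (h1.trans h2.symm)
      · exfalso
        have := (sw_cond hs j hj).1
        rw [← hab] at this
        exact hU this
      · exfalso
        have := (sw_cond hs i hi).1
        rw [hab] at this
        exact hU this
      · exact sw_einj hs _ _ hab
    · intro i hi
      have hcn := sw_cond hs i hi
      rw [hrepl i hi hi]
      split_ifs with h1
      · refine ⟨Finset.mem_insert_self _ _, ?_, ?_⟩
        · rcases h1 with h1 | h1
          · rw [h1] at hcn
            exact Finset.mem_union_left _ hcn.2.1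
          · rw [h1] at hcn
            exact Finset.mem_union_right _ hcn.2.1
        · rcases h1 with h1 | h1
          · rw [h1] at hcn
            exact Finset.mem_union_left _ hcn.2.2
          · rw [h1] at hcn
            exact Finset.mem_union_right _ hcn.2.2
      · push_neg at h1
        exact ⟨mem_fold_iff.mpr (Or.inr ⟨hcn.1, h1.1, h1.2⟩), hcn.2.1, hcn.2.2⟩



lemma aux_hother {v w : Fin n} {s : WalkData n}
    (hs : IsSimpleWalk (insert (e ∪ e') ((Θ.erase e).erase e')) v w s)
    {c : ℕ} (hclen : c < s.len) (hcU : s.eds ⟨c, hclen⟩ = e ∪ e') :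
    ∀ (k : ℕ) (hk : k < s.len), k ≠ c →
      s.eds ⟨k, hk⟩ ∈ Θ ∧ s.eds ⟨k, hk⟩ ≠ e ∧ s.eds ⟨k, hk⟩ ≠ e' := by
  intro k hk hkc
  have hm := (sw_cond hs k hk).1
  rw [mem_fold_iff] at hm
  rcases hm with hm | hm
  · exact absurd (sw_einj hs hk hclen (hm.symm ▸ hcU.symm)) hkc
  · exact hm

set_option maxHeartbeats 1000000 in
lemma aux_xnot (hΘ : IsHypertree Θ) (he : e ∈ Θ) (he' : e' ∈ Θ)
    (hxe : x ∈ e) (hxe' : x ∈ e') {v w : Fin n} {s : WalkData n}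
    (hs : IsSimpleWalk (insert (e ∪ e') ((Θ.erase e).erase e')) v w s)
    {c : ℕ} (hclen : c < s.len) (hcU : s.eds ⟨c, hclen⟩ = e ∪ e')
    (hn1 : ¬(s.verts ⟨c, by omega⟩ ∈ e ∧ s.verts ⟨c + 1, by omega⟩ ∈ e))
    (hn2 : ¬(s.verts ⟨c, by omega⟩ ∈ e' ∧ s.verts ⟨c + 1, by omega⟩ ∈ e')) :
    ∀ (k : ℕ) (hk : k < s.len + 1), s.verts ⟨k, hk⟩ ≠ x := by
  have hother := aux_hother hs hclen hcU
  have ha : s.verts ⟨c, by omega⟩ ∈ e ∪ e' := by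
    have := (sw_cond hs c hclen).2.1; rwa [hcU] at this
  have hb : s.verts ⟨c + 1, by omega⟩ ∈ e ∪ e' := by
    have := (sw_cond hs c hclen).2.2; rwa [hcU] at this
  intro k hk hkx
  have uni : ∀ {v w : Fin n} {s1 s2 : WalkData n}, IsSimpleWalk Θ v w s1 →
      IsSimpleWalk Θ v w s2 → s1 = s2 := fun h1 h2 => (hΘ.2 _ _).unique h1 h2
  rcases (by omega : k < c ∨ k = c ∨ k = c + 1 ∨ c + 1 < k) with
    hkc | hkc | hkc | hkc
  · have hseg := segment_isSimpleWalk hs k c (by omega) (by omega) hk (by omega)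
    have hsegΘ : IsSimpleWalk Θ (s.verts ⟨k, hk⟩) (s.verts ⟨c, by omega⟩)
        (segment s k c) := by
      apply walk_mono hseg
      intro k2 hk2
      have hk2' : k2 < c - k := by simpa [segment_len] using hk2
      rw [segment_eds s k c k2 hk2 (by omega)]
      exact (hother (k + k2) (by omega) (by omega)).1
    rw [hkx] at hsegΘ
    have hane : x ≠ s.verts ⟨c, by omega⟩ := by
      intro hxa; rw [← hkx] at hxa
      have := sw_vinj hs hk (by omega) hxa; omega
    rcases Finset.mem_union.mp ha with hae | hae
    · have hsingle := single_isSimpleWalk (E := Θ) hane he hxe hae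
      have heq := uni hsingle hsegΘ
      have hed := eq_eds heq 0 (by rw [single_len]; omega)
        (by rw [segment_len]; omega)
      rw [segment_eds s k c 0 (by rw [segment_len]; omega) (by omega)] at hed
      exact (hother (k + 0) (by omega) (by omega)).2.1 hed.symm
    · have hsingle := single_isSimpleWalk (E := Θ) hane he' hxe' hae
      have heq := uni hsingle hsegΘ
      have hed := eq_eds heq 0 (by rw [single_len]; omega)
        (by rw [segment_len]; omega)
      rw [segment_eds s k c 0 (by rw [segment_len]; omega) (by omega)] at hed
      exact (hother (k + 0) (by omega) (by omega)).2.2 hed.symm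
  · have hax : s.verts ⟨c, by omega⟩ = x := by
      rw [← hkx]
      exact congrArg s.verts (Fin.ext (show c = k from hkc.symm))
    rcases Finset.mem_union.mp hb with hbe | hbe
    · exact hn1 ⟨by rw [hax]; exact hxe, hbe⟩
    · exact hn2 ⟨by rw [hax]; exact hxe', hbe⟩
  · have hbx : s.verts ⟨c + 1, by omega⟩ = x := by
      rw [← hkx]
      exact congrArg s.verts (Fin.ext (show c + 1 = k from hkc.symm))
    rcases Finset.mem_union.mp ha with hae | hae
    · exact hn1 ⟨hae, by rw [hbx]; exact hxe⟩
    · exact hn2 ⟨hae, by rw [hbx]; exact hxe'⟩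
  · have hseg := segment_isSimpleWalk hs (c + 1) k (by omega) (by omega)
      (by omega) hk
    have hsegΘ : IsSimpleWalk Θ (s.verts ⟨c + 1, by omega⟩) (s.verts ⟨k, hk⟩)
        (segment s (c + 1) k) := by
      apply walk_mono hseg
      intro k2 hk2
      have hk2' : k2 < k - (c + 1) := by simpa [segment_len] using hk2
      rw [segment_eds s (c + 1) k k2 hk2 (by omega)]
      exact (hother (c + 1 + k2) (by omega) (by omega)).1
    rw [hkx] at hsegΘ
    have hbne : s.verts ⟨c + 1, by omega⟩ ≠ x := by
      intro hxa; rw [← hkx] at hxa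
      have := sw_vinj hs (by omega) hk hxa; omega
    rcases Finset.mem_union.mp hb with hbe | hbe
    · have hsingle := single_isSimpleWalk (E := Θ) hbne he hbe hxe
      have heq := uni hsingle hsegΘ
      have hed := eq_eds heq 0 (by rw [single_len]; omega)
        (by rw [segment_len]; omega)
      rw [segment_eds s (c + 1) k 0 (by rw [segment_len]; omega)
        (by omega)] at hed
      exact (hother (c + 1 + 0) (by omega) (by omega)).2.1 hed.symm
    · have hsingle := single_isSimpleWalk (E := Θ) hbne he' hbe hxe'
      have heq := uni hsingle hsegΘ
      have hed := eq_eds heq 0 (by rw [single_len]; omega)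
        (by rw [segment_len]; omega)
      rw [segment_eds s (c + 1) k 0 (by rw [segment_len]; omega)
        (by omega)] at hed
      exact (hother (c + 1 + 0) (by omega) (by omega)).2.2 hed.symm

set_option maxHeartbeats 1000000 in
lemma aux_repl (hΘ : IsHypertree Θ) (he : e ∈ Θ) (he' : e' ∈ Θ)
    (hne : e ≠ e') {v w : Fin n} {s : WalkData n}
    (hs : IsSimpleWalk (insert (e ∪ e') ((Θ.erase e).erase e')) v w s)
    {c : ℕ} (hclen : c < s.len) (hcU : s.eds ⟨c, hclen⟩ = e ∪ e')
    (hb1 : s.verts ⟨c, by omega⟩ ∈ e ∧ s.verts ⟨c + 1, by omega⟩ ∈ e) :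
    IsSimpleWalk Θ v w (repl s (e ∪ e') e) := by
  have hother := aux_hother hs hclen hcU
  apply isSimpleWalk_intro
  · exact sw_start hs _
  · exact sw_end hs _
  · exact fun i j hi hj hab => sw_vinj hs hi hj hab
  · intro i j hi hj hab
    rw [repl_eds _ _ _ i hi hi, repl_eds _ _ _ j hj hj] at hab
    by_cases h1 : s.eds ⟨i, hi⟩ = e ∪ e' <;>
      by_cases h2 : s.eds ⟨j, hj⟩ = e ∪ e'
    · have hic := sw_einj hs hi hclen (h1.trans hcU.symm)
      have hjc := sw_einj hs hj hclen (h2.trans hcU.symm)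
      omega
    · rw [if_pos h1, if_neg h2] at hab
      have hjc : j ≠ c := fun hjc => h2 (by
        rw [show (⟨j, hj⟩ : Fin s.len) = ⟨c, hclen⟩ from Fin.ext hjc]
        exact hcU)
      exact absurd hab.symm ((hother j hj hjc).2.1)
    · rw [if_neg h1, if_pos h2] at hab
      have hic : i ≠ c := fun hic => h1 (by
        rw [show (⟨i, hi⟩ : Fin s.len) = ⟨c, hclen⟩ from Fin.ext hic]
        exact hcU)
      exact absurd hab ((hother i hi hic).2.1)
    · rw [if_neg h1, if_neg h2] at hab
      exact sw_einj hs _ _ hab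
  · intro i hi
    rw [repl_eds _ _ _ i hi hi]
    split_ifs with h1
    · have hic : i = c := sw_einj hs hi hclen (h1.trans hcU.symm)
      refine ⟨he, ?_, ?_⟩
      · show s.verts ⟨i, by omega⟩ ∈ e
        rw [show (⟨i, by omega⟩ : Fin (s.len + 1)) = ⟨c, by omega⟩ from
          Fin.ext hic]
        exact hb1.1
      · show s.verts ⟨i + 1, by omega⟩ ∈ e
        rw [show (⟨i + 1, by omega⟩ : Fin (s.len + 1)) = ⟨c + 1, by omega⟩ from
          Fin.ext (by omega : i + 1 = c + 1)]
        exact hb1.2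
    · have hic : i ≠ c := fun hic => h1 (by
        rw [show (⟨i, hi⟩ : Fin s.len) = ⟨c, hclen⟩ from Fin.ext hic]
        exact hcU)
      exact ⟨(hother i hi hic).1, (sw_cond hs i hi).2.1, (sw_cond hs i hi).2.2⟩

set_option maxHeartbeats 2000000 in
lemma aux_expand (hΘ : IsHypertree Θ) (he : e ∈ Θ) (he' : e' ∈ Θ)
    (hne : e ≠ e') (hxe : x ∈ e) (hxe' : x ∈ e') {v w : Fin n} {s : WalkData n}
    (hs : IsSimpleWalk (insert (e ∪ e') ((Θ.erase e).erase e')) v w s)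
    {c : ℕ} (hclen : c < s.len) (hcU : s.eds ⟨c, hclen⟩ = e ∪ e')
    (hb3 : s.verts ⟨c, by omega⟩ ∈ e)
    (hbe' : s.verts ⟨c + 1, by omega⟩ ∈ e')
    (hxv : ∀ (k : ℕ) (hk : k < s.len + 1), s.verts ⟨k, hk⟩ ≠ x) :
    IsSimpleWalk Θ v w (expand s c x e e') := by
  have hother := aux_hother hs hclen hcU
  apply isSimpleWalk_intro
  · rw [expand_verts, if_pos (Nat.zero_le c), nverts_eq s 0 (by omega)]
    exact sw_start hs _
  · rw [expand_verts]
    rw [expand_len]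
    rw [if_neg (show ¬ s.len + 1 ≤ c by omega),
      if_neg (show ¬ s.len + 1 = c + 1 by omega),
      show s.len + 1 - 1 = s.len from rfl, nverts_eq s s.len (le_refl _)]
    exact sw_end hs _
  · intro i j hi hj hab
    rw [expand_verts, expand_verts] at hab
    simp only [expand_len] at hi hj
    rcases (by omega : i ≤ c ∨ i = c + 1 ∨ c + 1 < i) with h1 | h1 | h1 <;>
      rcases (by omega : j ≤ c ∨ j = c + 1 ∨ c + 1 < j) with h2 | h2 | h2
    · rw [if_pos h1, if_pos h2, nverts_eq s i (by omega),
        nverts_eq s j (by omega)] at hab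
      have := sw_vinj hs _ _ hab; omega
    · rw [if_pos h1, if_neg (show ¬ j ≤ c by omega), if_pos h2,
        nverts_eq s i (by omega)] at hab
      exact absurd hab (hxv i (by omega))
    · rw [if_pos h1, if_neg (show ¬ j ≤ c by omega),
        if_neg (show ¬ j = c + 1 by omega), nverts_eq s i (by omega),
        nverts_eq s (j - 1) (by omega)] at hab
      have := sw_vinj hs _ _ hab; omega
    · rw [if_neg (show ¬ i ≤ c by omega), if_pos h1, if_pos h2,
        nverts_eq s j (by omega)] at hab
      exact absurd hab.symm (hxv j (by omega))
    · omega
    · rw [if_neg (show ¬ i ≤ c by omega), if_pos h1,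
        if_neg (show ¬ j ≤ c by omega), if_neg (show ¬ j = c + 1 by omega),
        nverts_eq s (j - 1) (by omega)] at hab
      exact absurd hab.symm (hxv (j - 1) (by omega))
    · rw [if_neg (show ¬ i ≤ c by omega), if_neg (show ¬ i = c + 1 by omega),
        if_pos h2, nverts_eq s (i - 1) (by omega),
        nverts_eq s j (by omega)] at hab
      have := sw_vinj hs _ _ hab; omega
    · rw [if_neg (show ¬ i ≤ c by omega), if_neg (show ¬ i = c + 1 by omega),
        if_neg (show ¬ j ≤ c by omega), if_pos h2,
        nverts_eq s (i - 1) (by omega)] at hab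
      exact absurd hab (hxv (i - 1) (by omega))
    · rw [if_neg (show ¬ i ≤ c by omega), if_neg (show ¬ i = c + 1 by omega),
        if_neg (show ¬ j ≤ c by omega), if_neg (show ¬ j = c + 1 by omega),
        nverts_eq s (i - 1) (by omega), nverts_eq s (j - 1) (by omega)] at hab
      have := sw_vinj hs _ _ hab; omega
  · intro i j hi hj hab
    rw [expand_eds, expand_eds] at hab
    simp only [expand_len] at hi hj
    rcases (by omega : i < c ∨ i = c ∨ i = c + 1 ∨ c + 1 < i) with
      h1 | h1 | h1 | h1 <;>
      rcases (by omega : j < c ∨ j = c ∨ j = c + 1 ∨ c + 1 < j) with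
        h2 | h2 | h2 | h2
    · rw [if_pos h1, if_pos h2, neds_eq s i (by omega),
        neds_eq s j (by omega)] at hab
      have := sw_einj hs _ _ hab; omega
    · rw [if_pos h1, if_neg (show ¬ j < c by omega), if_pos h2,
        neds_eq s i (by omega)] at hab
      exact absurd hab ((hother i (by omega) (by omega)).2.1)
    · rw [if_pos h1, if_neg (show ¬ j < c by omega),
        if_neg (show ¬ j = c by omega), if_pos h2,
        neds_eq s i (by omega)] at hab
      exact absurd hab ((hother i (by omega) (by omega)).2.2)
    · rw [if_pos h1, if_neg (show ¬ j < c by omega),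
        if_neg (show ¬ j = c by omega), if_neg (show ¬ j = c + 1 by omega),
        neds_eq s i (by omega), neds_eq s (j - 1) (by omega)] at hab
      have := sw_einj hs _ _ hab; omega
    · rw [if_neg (show ¬ i < c by omega), if_pos h1, if_pos h2,
        neds_eq s j (by omega)] at hab
      exact absurd hab.symm ((hother j (by omega) (by omega)).2.1)
    · omega
    · rw [if_neg (show ¬ i < c by omega), if_pos h1,
        if_neg (show ¬ j < c by omega), if_neg (show ¬ j = c by omega),
        if_pos h2] at hab
      exact absurd hab hne
    · rw [if_neg (show ¬ i < c by omega), if_pos h1,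
        if_neg (show ¬ j < c by omega), if_neg (show ¬ j = c by omega),
        if_neg (show ¬ j = c + 1 by omega), neds_eq s (j - 1) (by omega)] at hab
      exact absurd hab.symm ((hother (j - 1) (by omega) (by omega)).2.1)
    · rw [if_neg (show ¬ i < c by omega), if_neg (show ¬ i = c by omega),
        if_pos h1, if_pos h2, neds_eq s j (by omega)] at hab
      exact absurd hab.symm ((hother j (by omega) (by omega)).2.2)
    · rw [if_neg (show ¬ i < c by omega), if_neg (show ¬ i = c by omega),
        if_pos h1, if_neg (show ¬ j < c by omega), if_pos h2] at hab
      exact absurd hab hne.symm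
    · omega
    · rw [if_neg (show ¬ i < c by omega), if_neg (show ¬ i = c by omega),
        if_pos h1, if_neg (show ¬ j < c by omega),
        if_neg (show ¬ j = c by omega), if_neg (show ¬ j = c + 1 by omega),
        neds_eq s (j - 1) (by omega)] at hab
      exact absurd hab.symm ((hother (j - 1) (by omega) (by omega)).2.2)
    · rw [if_neg (show ¬ i < c by omega), if_neg (show ¬ i = c by omega),
        if_neg (show ¬ i = c + 1 by omega), if_pos h2,
        neds_eq s (i - 1) (by omega), neds_eq s j (by omega)] at hab
      have := sw_einj hs _ _ hab; omega
    · rw [if_neg (show ¬ i < c by omega), if_neg (show ¬ i = c by omega),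
        if_neg (show ¬ i = c + 1 by omega), if_neg (show ¬ j < c by omega),
        if_pos h2, neds_eq s (i - 1) (by omega)] at hab
      exact absurd hab ((hother (i - 1) (by omega) (by omega)).2.1)
    · rw [if_neg (show ¬ i < c by omega), if_neg (show ¬ i = c by omega),
        if_neg (show ¬ i = c + 1 by omega), if_neg (show ¬ j < c by omega),
        if_neg (show ¬ j = c by omega), if_pos h2,
        neds_eq s (i - 1) (by omega)] at hab
      exact absurd hab ((hother (i - 1) (by omega) (by omega)).2.2)
    · rw [if_neg (show ¬ i < c by omega), if_neg (show ¬ i = c by omega),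
        if_neg (show ¬ i = c + 1 by omega), if_neg (show ¬ j < c by omega),
        if_neg (show ¬ j = c by omega), if_neg (show ¬ j = c + 1 by omega),
        neds_eq s (i - 1) (by omega), neds_eq s (j - 1) (by omega)] at hab
      have := sw_einj hs _ _ hab; omega
  · intro i hi
    rw [expand_eds, expand_verts, expand_verts]
    simp only [expand_len] at hi
    rcases (by omega : i < c ∨ i = c ∨ i = c + 1 ∨ c + 1 < i) with
      h1 | h1 | h1 | h1
    · rw [if_pos h1, if_pos (show i ≤ c by omega),
        if_pos (show i + 1 ≤ c by omega), neds_eq s i (by omega),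
        nverts_eq s i (by omega), nverts_eq s (i + 1) (by omega)]
      have hcn := sw_cond hs i (by omega)
      exact ⟨(hother i (by omega) (by omega)).1, hcn.2.1, hcn.2.2⟩
    · rw [if_neg (show ¬ i < c by omega), if_pos h1,
        if_pos (show i ≤ c by omega), if_neg (show ¬ i + 1 ≤ c by omega),
        if_pos (show i + 1 = c + 1 by omega), nverts_eq s i (by omega)]
      refine ⟨he, ?_, hxe⟩
      rw [show (⟨i, by omega⟩ : Fin (s.len + 1)) = ⟨c, by omega⟩ from
        Fin.ext h1]
      exact hb3
    · rw [if_neg (show ¬ i < c by omega), if_neg (show ¬ i = c by omega),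
        if_pos h1, if_neg (show ¬ i ≤ c by omega), if_pos h1,
        if_neg (show ¬ i + 1 ≤ c by omega),
        if_neg (show ¬ i + 1 = c + 1 by omega),
        show i + 1 - 1 = i from rfl, nverts_eq s i (by omega)]
      refine ⟨he', hxe', ?_⟩
      rw [show (⟨i, by omega⟩ : Fin (s.len + 1)) = ⟨c + 1, by omega⟩ from
        Fin.ext h1]
      exact hbe'
    · rw [if_neg (show ¬ i < c by omega), if_neg (show ¬ i = c by omega),
        if_neg (show ¬ i = c + 1 by omega), if_neg (show ¬ i ≤ c by omega),
        if_neg (show ¬ i = c + 1 by omega),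
        if_neg (show ¬ i + 1 ≤ c by omega),
        if_neg (show ¬ i + 1 = c + 1 by omega),
        show i + 1 - 1 = i from rfl, neds_eq s (i - 1) (by omega),
        nverts_eq s (i - 1) (by omega), nverts_eq s i (by omega)]
      have hcn := sw_cond hs (i - 1) (by omega)
      refine ⟨(hother (i - 1) (by omega) (by omega)).1, hcn.2.1, ?_⟩
      rw [show (⟨i, by omega⟩ : Fin (s.len + 1)) = ⟨i - 1 + 1, by omega⟩ from
        Fin.ext (by omega : i = i - 1 + 1)]
      exact hcn.2.2


lemma unfold_isSimpleWalk (hΘ : IsHypertree Θ) (he : e ∈ Θ) (he' : e' ∈ Θ)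
    (hne : e ≠ e') (hxe : x ∈ e) (hxe' : x ∈ e') {v w : Fin n} {s : WalkData n}
    (hs : IsSimpleWalk (insert (e ∪ e') ((Θ.erase e).erase e')) v w s) :
    IsSimpleWalk Θ v w (unfold e e' x s) := by
  have hs2 : IsSimpleWalk (insert (e' ∪ e) ((Θ.erase e').erase e)) v w s := by
    rw [Finset.union_comm e' e, Finset.erase_right_comm]
    exact hs
  by_cases h : ∃ (i : ℕ) (_ : i < s.len), neds s i = e ∪ e'
  case neg =>
    rw [unfold, dif_neg h]
    apply walk_mono hs
    intro k hk
    have hm := (sw_cond hs k hk).1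
    rw [mem_fold_iff] at hm
    rcases hm with hm | hm
    · exact absurd ⟨k, hk, by rw [neds_eq s k hk]; exact hm⟩ h
    · exact hm.1
  case pos =>
  rw [unfold, dif_pos h]
  generalize hgen : h.choose = c
  have hcsp := h.choose_spec
  rw [hgen] at hcsp
  obtain ⟨hclen, hcU⟩ := hcsp
  rw [neds_eq s c hclen] at hcU
  have hcU2 : s.eds ⟨c, hclen⟩ = e' ∪ e := by
    rw [Finset.union_comm e' e]; exact hcU
  have ha : s.verts ⟨c, by omega⟩ ∈ e ∪ e' := by
    have := (sw_cond hs c hclen).2.1; rwa [hcU] at this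
  have hb : s.verts ⟨c + 1, by omega⟩ ∈ e ∪ e' := by
    have := (sw_cond hs c hclen).2.2; rwa [hcU] at this
  rw [nverts_eq s c (by omega), nverts_eq s (c + 1) (by omega)]
  split_ifs with hb1 hb2 hb3
  · exact aux_repl hΘ he he' hne hs hclen hcU hb1
  · have := aux_repl hΘ he' he hne.symm hs2 hclen hcU2 hb2
    rwa [Finset.union_comm e' e] at this
  · have hbe' : s.verts ⟨c + 1, by omega⟩ ∈ e' := by
      rcases Finset.mem_union.mp hb with hbe | hbe
      · exact absurd ⟨hb3, hbe⟩ hb1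
      · exact hbe
    have hxv := aux_xnot hΘ he he' hxe hxe' hs hclen hcU hb1 hb2
    exact aux_expand hΘ he he' hne hxe hxe' hs hclen hcU hb3 hbe' hxv
  · have hae' : s.verts ⟨c, by omega⟩ ∈ e' := by
      rcases Finset.mem_union.mp ha with hae | hae
      · exact absurd hae hb3
      · exact hae
    have hbe : s.verts ⟨c + 1, by omega⟩ ∈ e := by
      rcases Finset.mem_union.mp hb with hbe | hbe
      · exact hbe
      · exact absurd ⟨hae', hbe⟩ hb2
    have hxv := aux_xnot hΘ he' he hxe' hxe hs2 hclen hcU2 hb2 hb1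
    exact aux_expand hΘ he' he hne.symm hxe' hxe hs2 hclen hcU2 hae' hbe hxv


set_option maxHeartbeats 1000000 in
lemma contract_expand (s : WalkData n) (c : ℕ) (hc : c < s.len) (x : Fin n)
    (f g u : Finset (Fin n)) (hu : s.eds ⟨c, hc⟩ = u) :
    contract (expand s c x f g) c u = s := by
  apply walk_ext
  · rfl
  · intro k h1 h2
    rw [contract_verts]
    by_cases hk1 : k ≤ c
    · rw [if_pos hk1, nverts_eq _ k (by simp only [expand_len]; omega),
        expand_verts, if_pos hk1, nverts_eq s k (by omega)]
    · rw [if_neg hk1, nverts_eq _ (k + 1) (by simp only [expand_len]; omega),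
        expand_verts, if_neg (show ¬ k + 1 ≤ c by omega),
        if_neg (show ¬ k + 1 = c + 1 by omega), show k + 1 - 1 = k from rfl,
        nverts_eq s k (by omega)]
  · intro k h1 h2
    rw [contract_eds]
    rcases lt_trichotomy k c with hk1 | hk1 | hk1
    · rw [if_pos hk1, neds_eq _ k (by simp only [expand_len]; omega),
        expand_eds, if_pos hk1, neds_eq s k (by omega)]
    · rw [if_neg (show ¬ k < c by omega), if_pos hk1,
        show (⟨k, h2⟩ : Fin s.len) = ⟨c, hc⟩ from Fin.ext hk1, hu]
    · rw [if_neg (show ¬ k < c by omega), if_neg (show ¬ k = c by omega),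
        neds_eq _ (k + 1) (by simp only [expand_len]; omega), expand_eds,
        if_neg (show ¬ k + 1 < c by omega), if_neg (show ¬ k + 1 = c by omega),
        if_neg (show ¬ k + 1 = c + 1 by omega), show k + 1 - 1 = k from rfl,
        neds_eq s k (by omega)]

set_option maxHeartbeats 2000000 in
lemma fold_unfold (hΘ : IsHypertree Θ) (he : e ∈ Θ) (he' : e' ∈ Θ)
    (hne : e ≠ e') (hxe : x ∈ e) (hxe' : x ∈ e') {v w : Fin n} {s : WalkData n}
    (hs : IsSimpleWalk (insert (e ∪ e') ((Θ.erase e).erase e')) v w s) :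
    fold e e' (unfold e e' x s) = s := by
  have hUe : e ∪ e' ≠ e := (e_ne_U hΘ he he' hne).symm
  have hUe' : e ∪ e' ≠ e' := (e'_ne_U hΘ he he' hne).symm
  by_cases h : ∃ (i : ℕ) (_ : i < s.len), neds s i = e ∪ e'
  case neg =>
    rw [unfold, dif_neg h]
    have hnoe : ∀ (k : ℕ) (hk : k < s.len),
        s.eds ⟨k, hk⟩ ≠ e ∧ s.eds ⟨k, hk⟩ ≠ e' := by
      intro k hk
      have hm := (sw_cond hs k hk).1
      rw [mem_fold_iff] at hm
      rcases hm with hm | hm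
      · exact absurd ⟨k, hk, by rw [neds_eq s k hk]; exact hm⟩ h
      · exact ⟨hm.2.1, hm.2.2⟩
    have hcon : ¬ ∃ i : ℕ, i + 1 < s.len ∧ ((neds s i = e ∧ neds s (i + 1) = e') ∨
        (neds s i = e' ∧ neds s (i + 1) = e)) := by
      rintro ⟨i, hi, ⟨hd, _⟩ | ⟨hd, _⟩⟩ <;> rw [neds_eq s i (by omega)] at hd
      · exact (hnoe i (by omega)).1 hd
      · exact (hnoe i (by omega)).2 hd
    rw [fold, dif_neg hcon]
    apply walk_ext
    · rfl
    · intro k h1 h2; rfl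
    · intro k h1 h2
      rw [repl_eds _ _ _ k h1 h1, repl_eds s e (e ∪ e') k h1 h2,
        if_neg (hnoe k h2).1, if_neg (hnoe k h2).2]
  case pos =>
  rw [unfold, dif_pos h]
  generalize hgen : h.choose = c
  have hcsp := h.choose_spec
  rw [hgen] at hcsp
  obtain ⟨hclen, hcU⟩ := hcsp
  rw [neds_eq s c hclen] at hcU
  have hother := aux_hother hs hclen hcU
  rw [nverts_eq s c (by omega), nverts_eq s (c + 1) (by omega)]
  split_ifs with hb1 hb2 hb3
  · -- t = repl s (e ∪ e') e
    have hteds : ∀ (k : ℕ) (hk : k < s.len)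
        (hk2 : k < (repl s (e ∪ e') e).len),
        (repl s (e ∪ e') e).eds ⟨k, hk2⟩ = if k = c then e else s.eds ⟨k, hk⟩ := by
      intro k hk hk2
      rw [repl_eds _ _ _ k hk2 hk]
      by_cases hkc : k = c
      · rw [if_pos (show s.eds ⟨k, hk⟩ = e ∪ e' by
          rw [show (⟨k, hk⟩ : Fin s.len) = ⟨c, hclen⟩ from Fin.ext hkc]
          exact hcU), if_pos hkc]
      · rw [if_neg (fun hx => hkc (sw_einj hs hk hclen (hx.trans hcU.symm))),
          if_neg hkc]
    have hcon : ¬ ∃ i : ℕ, i + 1 < (repl s (e ∪ e') e).len ∧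
        ((neds (repl s (e ∪ e') e) i = e ∧ neds (repl s (e ∪ e') e) (i + 1) = e') ∨
        (neds (repl s (e ∪ e') e) i = e' ∧ neds (repl s (e ∪ e') e) (i + 1) = e)) := by
      rintro ⟨i, hi, ⟨_, hd⟩ | ⟨hd, _⟩⟩
      all_goals have hi' : i + 1 < s.len := by simpa only [repl_len] using hi
      · rw [neds_eq (repl s (e ∪ e') e) (i + 1) hi, hteds (i + 1) hi' hi] at hd
        by_cases hkc : i + 1 = c
        · rw [if_pos hkc] at hd; exact hne hd
        · rw [if_neg hkc] at hd; exact (hother (i + 1) hi hkc).2.2 hd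
      · rw [neds_eq (repl s (e ∪ e') e) i (by simp only [repl_len]; omega),
          hteds i (by omega) (by simp only [repl_len]; omega)] at hd
        by_cases hkc : i = c
        · rw [if_pos hkc] at hd; exact hne hd
        · rw [if_neg hkc] at hd; exact (hother i (by omega) hkc).2.2 hd
    rw [fold, dif_neg hcon]
    apply walk_ext
    · rfl
    · intro k h1 h2; rfl
    · intro k h1 h2
      rw [repl_eds _ _ _ k h1 h1,
        repl_eds (repl s (e ∪ e') e) e (e ∪ e') k h1 h1, hteds k h2 h1]
      by_cases hkc : k = c
      · rw [if_pos hkc, if_pos rfl, if_neg hUe',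
          show (⟨k, h2⟩ : Fin s.len) = ⟨c, hclen⟩ from Fin.ext hkc, hcU]
      · rw [if_neg hkc, if_neg (hother k h2 hkc).2.1,
          if_neg (hother k h2 hkc).2.2]
  · -- t = repl s (e ∪ e') e'
    have hteds : ∀ (k : ℕ) (hk : k < s.len)
        (hk2 : k < (repl s (e ∪ e') e').len),
        (repl s (e ∪ e') e').eds ⟨k, hk2⟩ =
          if k = c then e' else s.eds ⟨k, hk⟩ := by
      intro k hk hk2
      rw [repl_eds _ _ _ k hk2 hk]
      by_cases hkc : k = c
      · rw [if_pos (show s.eds ⟨k, hk⟩ = e ∪ e' by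
          rw [show (⟨k, hk⟩ : Fin s.len) = ⟨c, hclen⟩ from Fin.ext hkc]
          exact hcU), if_pos hkc]
      · rw [if_neg (fun hx => hkc (sw_einj hs hk hclen (hx.trans hcU.symm))),
          if_neg hkc]
    have hcon : ¬ ∃ i : ℕ, i + 1 < (repl s (e ∪ e') e').len ∧
        ((neds (repl s (e ∪ e') e') i = e ∧ neds (repl s (e ∪ e') e') (i + 1) = e') ∨
        (neds (repl s (e ∪ e') e') i = e' ∧ neds (repl s (e ∪ e') e') (i + 1) = e)) := by
      rintro ⟨i, hi, ⟨hd, _⟩ | ⟨_, hd⟩⟩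
      all_goals have hi' : i + 1 < s.len := by simpa only [repl_len] using hi
      · rw [neds_eq (repl s (e ∪ e') e') i (by simp only [repl_len]; omega),
          hteds i (by omega) (by simp only [repl_len]; omega)] at hd
        by_cases hkc : i = c
        · rw [if_pos hkc] at hd; exact hne hd.symm
        · rw [if_neg hkc] at hd; exact (hother i (by omega) hkc).2.1 hd
      · rw [neds_eq (repl s (e ∪ e') e') (i + 1) hi, hteds (i + 1) hi' hi] at hd
        by_cases hkc : i + 1 = c
        · rw [if_pos hkc] at hd; exact hne hd.symm
        · rw [if_neg hkc] at hd; exact (hother (i + 1) hi hkc).2.1 hd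
    rw [fold, dif_neg hcon]
    apply walk_ext
    · rfl
    · intro k h1 h2; rfl
    · intro k h1 h2
      rw [repl_eds _ _ _ k h1 h1,
        repl_eds (repl s (e ∪ e') e') e (e ∪ e') k h1 h1, hteds k h2 h1]
      by_cases hkc : k = c
      · rw [if_pos hkc, if_neg hne.symm, if_pos rfl,
          show (⟨k, h2⟩ : Fin s.len) = ⟨c, hclen⟩ from Fin.ext hkc, hcU]
      · rw [if_neg hkc, if_neg (hother k h2 hkc).2.1,
          if_neg (hother k h2 hkc).2.2]
  · -- t = expand s c x e e'
    have hEx : ∃ i : ℕ, i + 1 < (expand s c x e e').len ∧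
        ((neds (expand s c x e e') i = e ∧
          neds (expand s c x e e') (i + 1) = e') ∨
         (neds (expand s c x e e') i = e' ∧
          neds (expand s c x e e') (i + 1) = e)) := by
      refine ⟨c, by simp only [expand_len]; omega, Or.inl ⟨?_, ?_⟩⟩
      · rw [neds_eq _ c (by simp only [expand_len]; omega), expand_eds,
          if_neg (show ¬ c < c by omega), if_pos rfl]
      · rw [neds_eq _ (c + 1) (by simp only [expand_len]; omega), expand_eds,
          if_neg (show ¬ c + 1 < c by omega), if_neg (show ¬ c + 1 = c by omega),
          if_pos rfl]
    rw [fold, dif_pos hEx]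
    generalize hgen2 : hEx.choose = c'
    have hcsp2 := hEx.choose_spec
    rw [hgen2] at hcsp2
    obtain ⟨hc'1, hd⟩ := hcsp2
    simp only [expand_len] at hc'1
    have hpos_e : ∀ (k : ℕ) (hk : k < (expand s c x e e').len),
        (expand s c x e e').eds ⟨k, hk⟩ = e → k = c := by
      intro k hk hke
      have hk' : k < s.len + 1 := hk
      rw [expand_eds] at hke
      rcases (by omega : k < c ∨ k = c ∨ k = c + 1 ∨ c + 1 < k) with
        h1 | h1 | h1 | h1
      · rw [if_pos h1, neds_eq s k (by omega)] at hke
        exact absurd hke ((hother k (by omega) (by omega)).2.1)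
      · exact h1
      · rw [if_neg (show ¬ k < c by omega), if_neg (show ¬ k = c by omega),
          if_pos h1] at hke
        exact absurd hke hne.symm
      · rw [if_neg (show ¬ k < c by omega), if_neg (show ¬ k = c by omega),
          if_neg (show ¬ k = c + 1 by omega), neds_eq s (k - 1) (by omega)] at hke
        exact absurd hke ((hother (k - 1) (by omega) (by omega)).2.1)
    have hpos_e' : ∀ (k : ℕ) (hk : k < (expand s c x e e').len),
        (expand s c x e e').eds ⟨k, hk⟩ = e' → k = c + 1 := by
      intro k hk hke
      have hk' : k < s.len + 1 := hk
      rw [expand_eds] at hke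
      rcases (by omega : k < c ∨ k = c ∨ k = c + 1 ∨ c + 1 < k) with
        h1 | h1 | h1 | h1
      · rw [if_pos h1, neds_eq s k (by omega)] at hke
        exact absurd hke ((hother k (by omega) (by omega)).2.2)
      · rw [if_neg (show ¬ k < c by omega), if_pos h1] at hke
        exact absurd hke hne
      · exact h1
      · rw [if_neg (show ¬ k < c by omega), if_neg (show ¬ k = c by omega),
          if_neg (show ¬ k = c + 1 by omega), neds_eq s (k - 1) (by omega)] at hke
        exact absurd hke ((hother (k - 1) (by omega) (by omega)).2.2)
    have hcc : c' = c := by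
      rcases hd with ⟨hd1, _⟩ | ⟨hd1, hd2⟩
      · rw [neds_eq _ c' (by simp only [expand_len]; omega)] at hd1
        exact hpos_e c' (by simp only [expand_len]; omega) hd1
      · rw [neds_eq _ c' (by simp only [expand_len]; omega)] at hd1
        rw [neds_eq _ (c' + 1) (by simp only [expand_len]; omega)] at hd2
        have h1 := hpos_e' c' (by simp only [expand_len]; omega) hd1
        have h2 := hpos_e (c' + 1) (by simp only [expand_len]; omega) hd2
        omega
    subst hcc
    exact contract_expand s c' hclen x e e' (e ∪ e') hcU
  · -- t = expand s c x e' e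
    have hEx : ∃ i : ℕ, i + 1 < (expand s c x e' e).len ∧
        ((neds (expand s c x e' e) i = e ∧
          neds (expand s c x e' e) (i + 1) = e') ∨
         (neds (expand s c x e' e) i = e' ∧
          neds (expand s c x e' e) (i + 1) = e)) := by
      refine ⟨c, by simp only [expand_len]; omega, Or.inr ⟨?_, ?_⟩⟩
      · rw [neds_eq _ c (by simp only [expand_len]; omega), expand_eds,
          if_neg (show ¬ c < c by omega), if_pos rfl]
      · rw [neds_eq _ (c + 1) (by simp only [expand_len]; omega), expand_eds,
          if_neg (show ¬ c + 1 < c by omega), if_neg (show ¬ c + 1 = c by omega),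
          if_pos rfl]
    rw [fold, dif_pos hEx]
    generalize hgen2 : hEx.choose = c'
    have hcsp2 := hEx.choose_spec
    rw [hgen2] at hcsp2
    obtain ⟨hc'1, hd⟩ := hcsp2
    simp only [expand_len] at hc'1
    have hpos_e : ∀ (k : ℕ) (hk : k < (expand s c x e' e).len),
        (expand s c x e' e).eds ⟨k, hk⟩ = e → k = c + 1 := by
      intro k hk hke
      have hk' : k < s.len + 1 := hk
      rw [expand_eds] at hke
      rcases (by omega : k < c ∨ k = c ∨ k = c + 1 ∨ c + 1 < k) with
        h1 | h1 | h1 | h1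
      · rw [if_pos h1, neds_eq s k (by omega)] at hke
        exact absurd hke ((hother k (by omega) (by omega)).2.1)
      · rw [if_neg (show ¬ k < c by omega), if_pos h1] at hke
        exact absurd hke hne.symm
      · exact h1
      · rw [if_neg (show ¬ k < c by omega), if_neg (show ¬ k = c by omega),
          if_neg (show ¬ k = c + 1 by omega), neds_eq s (k - 1) (by omega)] at hke
        exact absurd hke ((hother (k - 1) (by omega) (by omega)).2.1)
    have hpos_e' : ∀ (k : ℕ) (hk : k < (expand s c x e' e).len),
        (expand s c x e' e).eds ⟨k, hk⟩ = e' → k = c := by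
      intro k hk hke
      have hk' : k < s.len + 1 := hk
      rw [expand_eds] at hke
      rcases (by omega : k < c ∨ k = c ∨ k = c + 1 ∨ c + 1 < k) with
        h1 | h1 | h1 | h1
      · rw [if_pos h1, neds_eq s k (by omega)] at hke
        exact absurd hke ((hother k (by omega) (by omega)).2.2)
      · exact h1
      · rw [if_neg (show ¬ k < c by omega), if_neg (show ¬ k = c by omega),
          if_pos h1] at hke
        exact absurd hke hne
      · rw [if_neg (show ¬ k < c by omega), if_neg (show ¬ k = c by omega),
          if_neg (show ¬ k = c + 1 by omega), neds_eq s (k - 1) (by omega)] at hke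
        exact absurd hke ((hother (k - 1) (by omega) (by omega)).2.2)
    have hcc : c' = c := by
      rcases hd with ⟨hd1, hd2⟩ | ⟨hd1, _⟩
      · rw [neds_eq _ c' (by simp only [expand_len]; omega)] at hd1
        rw [neds_eq _ (c' + 1) (by simp only [expand_len]; omega)] at hd2
        have h1 := hpos_e c' (by simp only [expand_len]; omega) hd1
        have h2 := hpos_e' (c' + 1) (by simp only [expand_len]; omega) hd2
        omega
      · rw [neds_eq _ c' (by simp only [expand_len]; omega)] at hd1
        exact hpos_e' c' (by simp only [expand_len]; omega) hd1
    subst hcc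
    exact contract_expand s c' hclen x e' e (e ∪ e') hcU

end Main
end FoldAux

/-- A single fold of a hypertree (replacing two intersecting hyperedges `e, e'` by
their union) yields a hypertree. -/
theorem stmt8 (n : ℕ) (Θ : Finset (Finset (Fin n))) (hΘ : IsHypertree Θ)
    (e e' : Finset (Fin n)) (he : e ∈ Θ) (he' : e' ∈ Θ) (hne : e ≠ e')
    (hint : (e ∩ e').Nonempty) :
    IsHypertree (insert (e ∪ e') ((Θ.erase e).erase e')) := by
  obtain ⟨y, hy⟩ := hint
  have hxe : y ∈ e := (Finset.mem_inter.mp hy).1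
  have hxe' : y ∈ e' := (Finset.mem_inter.mp hy).2
  constructor
  · intro f hf
    rw [FoldAux.mem_fold_iff] at hf
    rcases hf with rfl | hf
    · have h1 := hΘ.1 e he
      have h2 : e.card ≤ (e ∪ e').card :=
        Finset.card_le_card Finset.subset_union_left
      omega
    · exact hΘ.1 f hf.1
  · intro v w
    obtain ⟨s, hsw, huni⟩ := hΘ.2 v w
    refine ⟨FoldAux.fold e e' s,
      FoldAux.fold_isSimpleWalk hΘ he he' hne hxe hxe' hsw, fun t ht => ?_⟩
    have h2 : FoldAux.unfold e e' y t = s :=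
      huni _ (FoldAux.unfold_isSimpleWalk hΘ he he' hne hxe hxe' ht)
    rw [← h2]
    exact (FoldAux.fold_unfold hΘ he he' hne hxe hxe' ht).symm
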